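/- (Bound extraction from a Lagrangian lower bound, ℓ1 case.) Under the hypotheses of the previous sensitivity result, let UB be an upper bound on the optimal value of the original mixed-integer problem whose continuous relaxation is P, and suppose 1 − ∑_i ᾱ_i y_i x_{i k₀} > 0. Then any optimal solution of the mixed-integer problem satisfies w_{k₀}⁺ ≤ (UB − Z)/(1 − ∑_i ᾱ_i y_i x_{i k₀}) + w̃. -/
import Mathlib


open Finset

/-- Bound extraction from a Lagrangian lower bound (ℓ1 case). If UB bounds
the optimal value of the mixed-integer problem, P is its relaxation (after the change of
variable w_{k₀}⁺ = w̄_{k₀}⁺ + w̃) whose Lagrangian lower bound is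
Z + ŵ(1 − ∑ᾱ_i y_i x_{ik₀}), and 1 − ∑ᾱ_i y_i x_{ik₀} > 0, then every optimal solution
of the mixed-integer problem satisfies w_{k₀}⁺ ≤ (UB − Z)/(1 − ∑ᾱ_i y_i x_{ik₀}) + w̃. -/
theorem bound_extraction_l1
    (n d : ℕ) (x : Fin n → Fin d → ℝ) (y : Fin n → ℝ) (hy : ∀ i, y i = 1 ∨ y i = -1)
    (C : ℝ) (hC : 0 < C) (M : Fin n → ℝ) (hM : ∀ i, 0 ≤ M i)
    (k₀ : Fin d) (wt : ℝ) (hwt : 0 < wt)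
    (Z UB : ℝ) (α : Fin n → ℝ) (hα : ∀ i, 0 ≤ α i)
    (hcoef : 0 < 1 - ∑ i, α i * (y i * x i k₀))
    -- feasibility for the mixed-integer big-M ℓ1 ramp-loss problem
    (Feasible : ((Fin d → ℝ) × (Fin d → ℝ) × ℝ × (Fin n → ℝ) × (Fin n → ℝ)) → Prop)
    (hFeas : ∀ v, Feasible v ↔
      (∀ k, 0 ≤ v.1 k ∧ 0 ≤ v.2.1 k) ∧
      (∀ i, 0 ≤ v.2.2.2.1 i ∧ v.2.2.2.1 i ≤ 2) ∧
      (∀ i, v.2.2.2.1 i ≤ 2 * (1 - v.2.2.2.2 i)) ∧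
      (∀ i, v.2.2.2.2 i = 0 ∨ v.2.2.2.2 i = 1) ∧
      (∀ i, y i * ((∑ k, (v.1 k - v.2.1 k) * x i k) + v.2.2.1) ≥
        1 - v.2.2.2.1 i - M i * v.2.2.2.2 i))
    (obj : ((Fin d → ℝ) × (Fin d → ℝ) × ℝ × (Fin n → ℝ) × (Fin n → ℝ)) → ℝ)
    (hobj : ∀ v, obj v = (∑ k, (v.1 k + v.2.1 k)) +
      C * ((∑ i, v.2.2.2.1 i) + 2 * ∑ i, v.2.2.2.2 i))
    -- the Lagrangian lower bound coming from the sensitivity result for P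
    (hsens : ∀ v, Feasible v →
      Z + (v.1 k₀ - wt) * (1 - ∑ i, α i * (y i * x i k₀)) ≤ obj v)
    -- an optimal solution of the mixed-integer problem, and UB an upper bound
    (vstar : (Fin d → ℝ) × (Fin d → ℝ) × ℝ × (Fin n → ℝ) × (Fin n → ℝ))
    (hfeas : Feasible vstar) (hopt : ∀ v, Feasible v → obj vstar ≤ obj v)
    (hUB : obj vstar ≤ UB) :
    vstar.1 k₀ ≤ (UB - Z) / (1 - ∑ i, α i * (y i * x i k₀)) + wt := by
  have h := hsens vstar hfeas
  have h2 : (vstar.1 k₀ - wt) * (1 - ∑ i, α i * (y i * x i k₀)) ≤ UB - Z := by linarith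
  have h3 : vstar.1 k₀ - wt ≤ (UB - Z) / (1 - ∑ i, α i * (y i * x i k₀)) :=
    (le_div_iff₀ hcoef).mpr h2
  linarith
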